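/- arXiv:1901.09158 — 2 statements merged into one kernel-verified Lean document; each statement's English description precedes it below -/
import Mathlib

section
/- For the Boolean tree T_{N,Bool} = {∅, 1, 2, ..., N} (with N ≥ 2), the cumulant coefficients satisfy α_{T_{N,Bool}, π} = 1 if π is an interval partition and α_{T_{N,Bool}, π} = 0 otherwise. -/
/-- The alternating reduction of a string: replace each maximal run of
consecutive equal letters by a single occurrence of that letter. -/
def red {α : Type*} [DecidableEq α] : List α → List α
  | [] => []
  | [a] => [a]
  | a :: b :: t => if a = b then red (b :: t) else a :: red (b :: t)

/-- A rooted subtree of the tree of alternating strings on alphabet `α`. -/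
def IsRootedSubtree {α : Type*} (S : Set (List α)) : Prop :=
  (∀ s ∈ S, s.Chain' (· ≠ ·)) ∧ [] ∈ S ∧ ∀ s ∈ S, s.tail ∈ S

/-- Partitions of finite subsets of `ℕ` (finite totally ordered sets, up to
isomorphism), given by their set of blocks. -/
abbrev Blocks : Type := Finset (Finset ℕ)

/-- `π` is a non-crossing partition (of its ground set `⋃ π`). -/
def IsNC (π : Blocks) : Prop :=
  (∀ B ∈ π, B.Nonempty) ∧
  (∀ B ∈ π, ∀ C ∈ π, B ≠ C → Disjoint B C) ∧
  (∀ B ∈ π, ∀ C ∈ π, B ≠ C →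
    ¬ ∃ i₁ j₁ i₂ j₂ : ℕ, i₁ < j₁ ∧ j₁ < i₂ ∧ i₂ < j₂ ∧
      i₁ ∈ B ∧ i₂ ∈ B ∧ j₁ ∈ C ∧ j₂ ∈ C)

/-- `V` is nested inside `W`. -/
def NestedIn (V W : Finset ℕ) : Prop :=
  ∃ j ∈ W, ∃ k ∈ W, ∀ x ∈ V, j < x ∧ x < k

/-- `V` is immediately nested inside `W` (an edge of the nesting tree of `π`). -/
def ImmNested (π : Blocks) (V W : Finset ℕ) : Prop :=
  NestedIn V W ∧ ¬ ∃ X ∈ π, NestedIn V X ∧ NestedIn X W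

/-- Adjacency of blocks in the nesting tree `graph(π)` (away from the root). -/
def AdjBlocks (π : Blocks) (V W : Finset ℕ) : Prop :=
  ImmNested π V W ∨ ImmNested π W V

/-- `V` and `W` lie in the same `χ`-component of `π`: they are joined by a path
in `graph(π) ∖ {∅}` all of whose edges join blocks of the same color. -/
def sameComp {N : ℕ} (π : Blocks) (χ : Finset ℕ → Fin N) (V W : Finset ℕ) : Prop :=
  Relation.ReflTransGen
    (fun X Y => X ∈ π ∧ Y ∈ π ∧ AdjBlocks π X Y ∧ χ X = χ Y) V W

open Classical in
noncomputable def component {N : ℕ} (π : Blocks) (χ : Finset ℕ → Fin N)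
    (V : Finset ℕ) : Finset (Finset ℕ) :=
  π.filter (fun W => sameComp π χ V W)

-- The `χ`-components of `π`.
open Classical in
noncomputable def components {N : ℕ} (π : Blocks) (χ : Finset ℕ → Fin N) :
    Finset Blocks :=
  π.image (fun V => component π χ V)

/-- `L` is the chain of `V` in `π`: the list `(V, V₁, …, V_d)` consisting of `V`
followed by all blocks surrounding `V`, each nested in the next. -/
def IsChainList (π : Blocks) (V : Finset ℕ) (L : List (Finset ℕ)) : Prop :=
  L.head? = some V ∧ (∀ W, W ∈ L.tail ↔ W ∈ π ∧ NestedIn V W) ∧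
  L.Chain' (fun X Y => NestedIn X Y) ∧ L.Nodup

/-- `χ ∈ X_w(π,T)`: for every block `V`, the alternating reduction of the color
string along the chain of `V` lies in `T`. -/
def WeaklyCompatible {N : ℕ} (T : Set (List (Fin N))) (π : Blocks)
    (χ : Finset ℕ → Fin N) : Prop :=
  ∀ V ∈ π, ∀ L : List (Finset ℕ), IsChainList π V L → red (L.map χ) ∈ T

/-- Extend a coloring of the blocks of `π` by a junk value. -/
def extendColor {N : ℕ} [NeZero N] (π : Blocks)
    (χ : {V : Finset ℕ // V ∈ π} → Fin N) : Finset ℕ → Fin N :=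
  fun W => if h : W ∈ π then χ ⟨W, h⟩ else 0

-- The right-hand side of the fixed-point identity for the cumulant
-- coefficients: `n^{−|π|} Σ_{χ ∈ X_w(π,T)} Π_{χ-components π'} a(π')`.
open Classical in
noncomputable def cumulantRHS {N : ℕ} [NeZero N] (n : ℕ) (T : Set (List (Fin N)))
    (a : Blocks → ℝ) (π : Blocks) : ℝ :=
  (∑ χ : ({V : Finset ℕ // V ∈ π} → Fin N),
      if WeaklyCompatible T π (extendColor π χ) then
        ∏ τ ∈ components π (extendColor π χ), a τ
      else 0) / (n : ℝ) ^ π.card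

/-- `a` is a family of cumulant coefficients for `T`: normalized on one-block
partitions, and satisfying the fixed-point identity for all non-crossing `π`. -/
def SatisfiesFP {N : ℕ} [NeZero N] (n : ℕ) (T : Set (List (Fin N)))
    (a : Blocks → ℝ) : Prop :=
  (∀ π : Blocks, IsNC π → π.card = 1 → a π = 1) ∧
  (∀ π : Blocks, IsNC π → a π = cumulantRHS n T a π)

/-- `π` is an interval partition: every block is order-convex within the ground set. -/
def IsIntervalPart (π : Blocks) : Prop :=
  ∀ B ∈ π, ∀ x ∈ B, ∀ z ∈ B, ∀ y ∈ π.biUnion id, x ≤ y → y ≤ z → y ∈ B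

-- For the Boolean tree `T_{N,Bool} = {∅,1,…,N}` (`N ≥ 2`), the cumulant
-- coefficients are `1` on interval partitions and `0` otherwise.
-- ==== auxiliary lemmas ====

theorem red_ne_nil' {α : Type*} [DecidableEq α] : ∀ (l : List α), l ≠ [] → red l ≠ []
  | [a], _ => by simp [red]
  | a :: b :: t, _ => by
    rw [red]
    split
    · exact red_ne_nil' (b :: t) (by simp)
    · simp

theorem red_single' {α : Type*} [DecidableEq α] : ∀ (l : List α) (c : α), red l = [c] →
    ∀ x ∈ l, x = c
  | [a], c, h => by simp [red] at h; simp [h]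
  | a :: b :: t, c, h => by
    rw [red] at h
    split at h
    · rename_i hab
      intro x hx
      rcases List.mem_cons.1 hx with rfl | hx
      · exact hab.trans (red_single' _ c h b (by simp))
      · exact red_single' _ c h x hx
    · have hne := red_ne_nil' (b :: t) (by simp)
      rw [List.cons_eq_cons] at h
      exact absurd h.2 hne
  | [], c, h => by simp [red] at h

theorem red_const' {α : Type*} [DecidableEq α] : ∀ (l : List α) (c : α), l ≠ [] →
    (∀ x ∈ l, x = c) → red l = [c]
  | [a], c, _, h => by simp [red]; exact h a (by simp)
  | a :: b :: t, c, _, h => by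
    rw [red]
    have hb : a = b := by rw [h a (by simp), h b (by simp)]
    rw [if_pos hb]
    exact red_const' (b :: t) c (by simp) (fun x hx => h x (List.mem_cons_of_mem _ hx))

theorem NestedIn.trans' {A B C : Finset ℕ} (h1 : NestedIn A B) (h2 : NestedIn B C) :
    NestedIn A C := by
  obtain ⟨j, hj, k, hk, h1⟩ := h1
  obtain ⟨j', hj', k', hk', h2⟩ := h2
  exact ⟨j', hj', k', hk', fun x hx =>
    ⟨(h2 j hj).1.trans (h1 x hx).1, (h1 x hx).2.trans (h2 k hk).2⟩⟩

theorem NestedIn.irrefl' {V : Finset ℕ} (hV : V.Nonempty) : ¬ NestedIn V V := by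
  rintro ⟨j, hj, k, hk, h⟩
  exact lt_irrefl j (h j hj).1

theorem nested_antisymm {V W : Finset ℕ} (hV : V.Nonempty)
    (h1 : NestedIn V W) (h2 : NestedIn W V) : False :=
  NestedIn.irrefl' hV (h1.trans' h2)

/-- If `j₂ < j₁ < k₂` with `j₁ ∈ W`, `j₂, k₂ ∈ X`, then `W` is nested in `X`. -/
theorem nested_of_between {π : Blocks} (hπ : IsNC π) {W X : Finset ℕ}
    (hW : W ∈ π) (hX : X ∈ π) (hWX : W ≠ X) {j₁ j₂ k₂ : ℕ}
    (hj₁ : j₁ ∈ W) (hj₂ : j₂ ∈ X) (hk₂ : k₂ ∈ X)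
    (h21 : j₂ < j₁) (h1k : j₁ < k₂) : NestedIn W X := by
  have hdisj := hπ.2.1 W hW X hX hWX
  refine ⟨j₂, hj₂, k₂, hk₂, fun w hw => ⟨?_, ?_⟩⟩
  · by_contra hc
    push_neg at hc
    have hne : w ≠ j₂ := fun h => (Finset.disjoint_left.1 hdisj hw) (h ▸ hj₂)
    have hlt : w < j₂ := lt_of_le_of_ne hc hne
    exact hπ.2.2 W hW X hX hWX ⟨w, j₂, j₁, k₂, hlt, h21, h1k, hw, hj₁, hj₂, hk₂⟩
  · by_contra hc
    push_neg at hc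
    have hne : k₂ ≠ w := fun h => (Finset.disjoint_left.1 hdisj hw) (h ▸ hk₂)
    have hlt : k₂ < w := lt_of_le_of_ne hc hne
    exact hπ.2.2 X hX W hW hWX.symm ⟨j₂, j₁, k₂, w, h21, h1k, hlt, hj₂, hk₂, hj₁, hw⟩

/-- Two blocks both surrounding a nonempty set are comparable under nesting. -/
theorem nested_total {π : Blocks} (hπ : IsNC π) {V W X : Finset ℕ} (hV : V.Nonempty)
    (hW : W ∈ π) (hX : X ∈ π) (hWX : W ≠ X)
    (h1 : NestedIn V W) (h2 : NestedIn V X) : NestedIn W X ∨ NestedIn X W := by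
  obtain ⟨v, hv⟩ := hV
  obtain ⟨j₁, hj₁, k₁, hk₁, hb1⟩ := h1
  obtain ⟨j₂, hj₂, k₂, hk₂, hb2⟩ := h2
  have hdisj := hπ.2.1 W hW X hX hWX
  rcases lt_trichotomy j₁ j₂ with h | h | h
  · exact Or.inr (nested_of_between hπ hX hW hWX.symm hj₂ hj₁ hk₁ h ((hb2 v hv).1.trans (hb1 v hv).2))
  · exact absurd (h ▸ hj₁) (fun hh => (Finset.disjoint_left.1 hdisj hh) hj₂)
  · exact Or.inl (nested_of_between hπ hW hX hWX hj₁ hj₂ hk₂ h ((hb1 v hv).1.trans (hb2 v hv).2))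

open Classical in
/-- In a finite family totally preordered by nesting, there is a minimal element. -/
theorem exists_min_nested (S : Finset (Finset ℕ)) (hne : S.Nonempty)
    (hirr : ∀ W ∈ S, ¬ NestedIn W W) :
    ∃ m ∈ S, ∀ X ∈ S, ¬ NestedIn X m := by
  obtain ⟨m, hm, hmax⟩ := S.exists_max_image
    (fun W => (S.filter (fun X => NestedIn W X)).card) hne
  refine ⟨m, hm, fun X hX hnest => ?_⟩
  have hsub : S.filter (fun Y => NestedIn m Y) ⊂ S.filter (fun Y => NestedIn X Y) := by
    refine Finset.ssubset_iff_of_subset (fun Y hY => ?_) |>.2 ?_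
    · rw [Finset.mem_filter] at hY ⊢
      exact ⟨hY.1, hnest.trans' hY.2⟩
    · exact ⟨m, Finset.mem_filter.2 ⟨hm, hnest⟩,
        fun hc => hirr m hm (Finset.mem_filter.1 hc).2⟩
  exact absurd (hmax X hX) (not_le.2 (Finset.card_lt_card hsub))

/-- A finite family totally ordered by nesting can be sorted into a list. -/
theorem exists_sorted_list : ∀ (n : ℕ) (S : Finset (Finset ℕ)), S.card = n →
    (∀ W ∈ S, ∀ X ∈ S, W ≠ X → NestedIn W X ∨ NestedIn X W) →
    (∀ W ∈ S, ¬ NestedIn W W) →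
    ∃ L : List (Finset ℕ), (∀ W, W ∈ L ↔ W ∈ S) ∧ L.Chain' NestedIn ∧ L.Nodup := by
  intro n
  induction n with
  | zero => intro S hcard _ _
            exact ⟨[], by simp [Finset.card_eq_zero.1 hcard], List.isChain_nil, by simp⟩
  | succ k ih =>
    intro S hcard htot hirr
    have hne : S.Nonempty := Finset.card_pos.1 (by omega)
    obtain ⟨m, hm, hmin⟩ := exists_min_nested S hne hirr
    obtain ⟨L', hL'mem, hL'chain, hL'nodup⟩ := ih (S.erase m)
      (by rw [Finset.card_erase_of_mem hm]; omega)
      (fun W hW X hX => htot W (Finset.mem_of_mem_erase hW) X (Finset.mem_of_mem_erase hX))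
      (fun W hW => hirr W (Finset.mem_of_mem_erase hW))
    refine ⟨m :: L', ?_, ?_, ?_⟩
    · intro W
      simp only [List.mem_cons, hL'mem, Finset.mem_erase]
      constructor
      · rintro (rfl | ⟨_, h⟩) <;> [exact hm; exact h]
      · intro hW
        rcases eq_or_ne W m with rfl | h
        · exact Or.inl rfl
        · exact Or.inr ⟨h, hW⟩
    · simp only [List.Chain', List.isChain_cons]
      refine ⟨fun h hh => ?_, hL'chain⟩
      have hhS : h ∈ S.erase m := (hL'mem h).1 (List.mem_of_mem_head? hh)
      rw [Finset.mem_erase] at hhS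
      rcases htot m hm h hhS.2 (Ne.symm hhS.1) with hn | hn
      · exact hn
      · exact absurd hn (hmin h hhS.2)
    · exact List.nodup_cons.2 ⟨fun hc =>
        absurd rfl (Finset.mem_erase.1 ((hL'mem m).1 hc)).1, hL'nodup⟩

theorem block_nonempty {π : Blocks} (hπ : IsNC π) {V : Finset ℕ} (hV : V ∈ π) :
    V.Nonempty := hπ.1 V hV

open Classical in
theorem exists_chainList {π : Blocks} (hπ : IsNC π) {V : Finset ℕ} (hV : V ∈ π) :
    ∃ L, IsChainList π V L := by
  set S := π.filter (fun W => NestedIn V W) with hS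
  have hmemS : ∀ W, W ∈ S ↔ W ∈ π ∧ NestedIn V W := by
    intro W; rw [hS, Finset.mem_filter]
  obtain ⟨L', hmem, hchain, hnodup⟩ := exists_sorted_list S.card S rfl
    (fun W hW X hX hne => nested_total hπ (block_nonempty hπ hV)
      ((hmemS W).1 hW).1 ((hmemS X).1 hX).1 hne ((hmemS W).1 hW).2 ((hmemS X).1 hX).2)
    (fun W hW => NestedIn.irrefl' (block_nonempty hπ ((hmemS W).1 hW).1))
  refine ⟨V :: L', rfl, fun W => by rw [List.tail_cons, hmem, hmemS], ?_, ?_⟩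
  · simp only [List.Chain', List.isChain_cons]
    exact ⟨fun h hh => ((hmemS h).1 ((hmem h).1 (List.mem_of_mem_head? hh))).2, hchain⟩
  · exact List.nodup_cons.2 ⟨fun hc =>
      NestedIn.irrefl' (block_nonempty hπ hV) ((hmemS V).1 ((hmem V).1 hc)).2, hnodup⟩

/-- The plain (colorless) adjacency relation on blocks. -/
def AdjRel (π : Blocks) (X Y : Finset ℕ) : Prop :=
  X ∈ π ∧ Y ∈ π ∧ AdjBlocks π X Y

theorem AdjRel.symm' {π : Blocks} {X Y : Finset ℕ} (h : AdjRel π X Y) : AdjRel π Y X :=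
  ⟨h.2.1, h.1, h.2.2.symm⟩

open Classical in
/-- Nesting implies connectivity in the nesting forest. -/
theorem rtg_of_nested {π : Blocks} (hπ : IsNC π) :
    ∀ (n : ℕ) (V W : Finset ℕ), (π.filter (fun X => NestedIn V X)).card ≤ n →
    V ∈ π → W ∈ π → NestedIn V W → Relation.ReflTransGen (AdjRel π) V W := by
  intro n
  induction n with
  | zero =>
    intro V W hcard hV hW hnest
    have h1 : 0 < (π.filter (fun X => NestedIn V X)).card :=
      Finset.card_pos.2 ⟨W, Finset.mem_filter.2 ⟨hW, hnest⟩⟩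
    omega
  | succ k ih =>
    intro V W hcard hV hW hnest
    set S := π.filter (fun X => NestedIn V X) with hS
    have hmemS : ∀ X, X ∈ S ↔ X ∈ π ∧ NestedIn V X := fun X => Finset.mem_filter
    have hne : S.Nonempty := ⟨W, (hmemS W).2 ⟨hW, hnest⟩⟩
    obtain ⟨m, hmS, hmin⟩ := exists_min_nested S hne
      (fun X hX => NestedIn.irrefl' (block_nonempty hπ ((hmemS X).1 hX).1))
    have hmπ : m ∈ π := ((hmemS m).1 hmS).1
    have hVm : NestedIn V m := ((hmemS m).1 hmS).2
    have hadj : AdjRel π V m := by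
      refine ⟨hV, hmπ, Or.inl ⟨hVm, ?_⟩⟩
      rintro ⟨X, hX, hVX, hXm⟩
      exact hmin X ((hmemS X).2 ⟨hX, hVX⟩) hXm
    rcases eq_or_ne m W with rfl | hmW
    · exact Relation.ReflTransGen.single hadj
    · have hmWn : NestedIn m W := by
        rcases nested_total hπ (block_nonempty hπ hV) hmπ hW hmW hVm hnest with h | h
        · exact h
        · exact absurd h (hmin W ((hmemS W).2 ⟨hW, hnest⟩))
      have hsub : π.filter (fun X => NestedIn m X) ⊂ S := by
        refine Finset.ssubset_iff_of_subset (fun Y hY => ?_) |>.2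
          ⟨m, hmS, fun hc => NestedIn.irrefl' (block_nonempty hπ hmπ)
            (Finset.mem_filter.1 hc).2⟩
        rw [Finset.mem_filter] at hY
        exact (hmemS Y).2 ⟨hY.1, hVm.trans' hY.2⟩
      have : (π.filter (fun X => NestedIn m X)).card ≤ k := by
        have := Finset.card_lt_card hsub
        omega
      exact Relation.ReflTransGen.head hadj (ih m W this hmπ hW hmWn)

theorem compat_iff {N : ℕ} {π : Blocks} (hπ : IsNC π) (χ : Finset ℕ → Fin N) :
    WeaklyCompatible {s : List (Fin N) | s = [] ∨ ∃ j : Fin N, s = [j]} π χ ↔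
      ∀ V ∈ π, ∀ W ∈ π, NestedIn V W → χ V = χ W := by
  constructor
  · intro h V hV W hW hn
    obtain ⟨L, hL⟩ := exists_chainList hπ hV
    have hT := h V hV L hL
    have hVL : V ∈ L := List.mem_of_mem_head? (by rw [hL.1]; rfl)
    have hWL : W ∈ L := List.mem_of_mem_tail ((hL.2.1 W).2 ⟨hW, hn⟩)
    have hLne : L.map χ ≠ [] := by
      intro hc
      rw [List.map_eq_nil_iff] at hc
      rw [hc] at hVL; exact absurd hVL List.not_mem_nil
    rcases hT with hc | ⟨j, hj⟩
    · exact absurd hc (red_ne_nil' _ hLne)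
    · rw [red_single' _ j hj (χ V) (List.mem_map_of_mem (f := χ) hVL),
        red_single' _ j hj (χ W) (List.mem_map_of_mem (f := χ) hWL)]
  · rintro h V hV L ⟨hhead, htail, _, _⟩
    rcases L with _ | ⟨a, t⟩
    · exact absurd hhead (by simp)
    · have ha : a = V := by simpa using hhead
      subst ha
      refine Or.inr ⟨χ a, red_const' _ _ (by simp) ?_⟩
      intro x hx
      obtain ⟨Y, hY, rfl⟩ := List.mem_map.1 hx
      rcases List.mem_cons.1 hY with rfl | hY
      · rfl
      · have := (htail Y).1 hY
        exact (h a hV Y this.1 this.2).symm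

open Classical in
noncomputable def pcomp (π : Blocks) (V : Finset ℕ) : Finset (Finset ℕ) :=
  π.filter (fun W => Relation.ReflTransGen (AdjRel π) V W)

open Classical in
noncomputable def pcomps (π : Blocks) : Finset Blocks := π.image (pcomp π)

theorem mem_pcomp {π : Blocks} {V W : Finset ℕ} :
    W ∈ pcomp π V ↔ W ∈ π ∧ Relation.ReflTransGen (AdjRel π) V W := by
  classical exact Finset.mem_filter

theorem pcomp_mem_self {π : Blocks} {V : Finset ℕ} (hV : V ∈ π) : V ∈ pcomp π V :=
  mem_pcomp.2 ⟨hV, Relation.ReflTransGen.refl⟩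

theorem rtg_symm {π : Blocks} {V W : Finset ℕ}
    (h : Relation.ReflTransGen (AdjRel π) V W) :
    Relation.ReflTransGen (AdjRel π) W V :=
  by haveI : Std.Symm (AdjRel π) := ⟨fun _ _ hxy => hxy.symm'⟩; exact Std.Symm.symm _ _ h

theorem pcomp_eq_of_rtg {π : Blocks} {V W : Finset ℕ}
    (h : Relation.ReflTransGen (AdjRel π) V W) : pcomp π V = pcomp π W := by
  ext X
  rw [mem_pcomp, mem_pcomp]
  exact ⟨fun hx => ⟨hx.1, (rtg_symm h).trans hx.2⟩, fun hx => ⟨hx.1, h.trans hx.2⟩⟩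

theorem color_eq_of_rtg {N : ℕ} {π : Blocks} {χ : Finset ℕ → Fin N}
    (hconst : ∀ V ∈ π, ∀ W ∈ π, NestedIn V W → χ V = χ W) {V W : Finset ℕ}
    (h : Relation.ReflTransGen (AdjRel π) V W) : χ V = χ W := by
  induction h with
  | refl => rfl
  | tail hstep hadj ih =>
    rename_i b c
    rcases hadj.2.2 with himm | himm
    · exact ih.trans (hconst b hadj.1 c hadj.2.1 himm.1)
    · exact ih.trans (hconst c hadj.2.1 b hadj.1 himm.1).symm

theorem component_eq_pcomp {N : ℕ} {π : Blocks} {χ : Finset ℕ → Fin N}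
    (hconst : ∀ V ∈ π, ∀ W ∈ π, NestedIn V W → χ V = χ W) (V : Finset ℕ) :
    component π χ V = pcomp π V := by
  classical
  ext X
  rw [component, Finset.mem_filter, mem_pcomp]
  constructor
  · rintro ⟨hX, hsc⟩
    exact ⟨hX, Relation.ReflTransGen.mono (fun x y hxy => ⟨hxy.1, hxy.2.1, hxy.2.2.1⟩) _ _ hsc⟩
  · rintro ⟨hX, hrtg⟩
    refine ⟨hX, Relation.ReflTransGen.mono (fun x y hxy => ⟨hxy.1, hxy.2.1, hxy.2.2, ?_⟩) _ _ hrtg⟩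
    rcases hxy.2.2 with himm | himm
    · exact hconst x hxy.1 y hxy.2.1 himm.1
    · exact (hconst y hxy.2.1 x hxy.1 himm.1).symm

theorem components_eq_pcomps {N : ℕ} {π : Blocks} {χ : Finset ℕ → Fin N}
    (hconst : ∀ V ∈ π, ∀ W ∈ π, NestedIn V W → χ V = χ W) :
    components π χ = pcomps π := by
  classical
  unfold components pcomps
  exact Finset.image_congr (fun V _ => component_eq_pcomp hconst V)

theorem extendColor_mem {N : ℕ} [NeZero N] {π : Blocks}
    {χ : {V : Finset ℕ // V ∈ π} → Fin N} {V : Finset ℕ} (h : V ∈ π) :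
    extendColor π χ V = χ ⟨V, h⟩ := dif_pos h

theorem pcomp_subset {π : Blocks} (V : Finset ℕ) : pcomp π V ⊆ π := by
  classical exact Finset.filter_subset _ _

theorem pcomps_disjoint {π : Blocks} {τ σ : Blocks} (hτ : τ ∈ pcomps π)
    (hσ : σ ∈ pcomps π) (hne : τ ≠ σ) : Disjoint τ σ := by
  obtain ⟨V, hV, rfl⟩ := Finset.mem_image.1 hτ
  obtain ⟨W, hW, rfl⟩ := Finset.mem_image.1 hσ
  rw [Finset.disjoint_left]
  intro X hX hX'
  exact hne ((pcomp_eq_of_rtg (mem_pcomp.1 hX).2).trans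
    (pcomp_eq_of_rtg (mem_pcomp.1 hX').2).symm)

theorem pcomps_biUnion {π : Blocks} : (pcomps π).biUnion id = π := by
  ext V
  rw [Finset.mem_biUnion]
  constructor
  · rintro ⟨τ, hτ, hV⟩
    obtain ⟨W, _, rfl⟩ := Finset.mem_image.1 hτ
    exact pcomp_subset W hV
  · intro hV
    exact ⟨pcomp π V, Finset.mem_image_of_mem _ hV, pcomp_mem_self hV⟩

theorem sum_card_pcomps {π : Blocks} : ∑ τ ∈ pcomps π, τ.card = π.card := by
  classical
  have h := Finset.card_biUnion (s := pcomps π) (t := id)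
    (fun τ hτ σ hσ hne => pcomps_disjoint hτ hσ hne)
  rw [pcomps_biUnion] at h
  exact h.symm

open Classical in
noncomputable def prep (π : Blocks) (τ : Blocks) : Finset ℕ :=
  if h : ∃ V ∈ π, pcomp π V = τ then h.choose else ∅

theorem prep_spec {π τ : Blocks} (h : τ ∈ pcomps π) :
    prep π τ ∈ π ∧ pcomp π (prep π τ) = τ := by
  classical
  obtain ⟨V, hV, hVτ⟩ := Finset.mem_image.1 h
  have hex : ∃ V ∈ π, pcomp π V = τ := ⟨V, hV, hVτ⟩
  rw [prep, dif_pos hex]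
  exact ⟨hex.choose_spec.1, hex.choose_spec.2⟩

open Classical in
theorem card_compat {N : ℕ} [NeZero N] {π : Blocks} (hπ : IsNC π) :
    (Finset.univ.filter (fun χ : {V : Finset ℕ // V ∈ π} → Fin N =>
      WeaklyCompatible {s : List (Fin N) | s = [] ∨ ∃ j : Fin N, s = [j]} π
        (extendColor π χ))).card = N ^ (pcomps π).card := by
  have key : (Finset.univ.filter (fun χ : {V : Finset ℕ // V ∈ π} → Fin N =>
      WeaklyCompatible {s : List (Fin N) | s = [] ∨ ∃ j : Fin N, s = [j]} π
        (extendColor π χ))).card =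
      (Finset.univ : Finset ({τ : Blocks // τ ∈ pcomps π} → Fin N)).card := by
    refine Finset.card_bij'
      (fun χ _ => fun τ => χ ⟨prep π τ.1, (prep_spec τ.2).1⟩)
      (fun g _ => fun V => g ⟨pcomp π V.1, Finset.mem_image_of_mem _ V.2⟩)
      (fun _ _ => Finset.mem_univ _) ?_ ?_ ?_
    · intro g _
      rw [Finset.mem_filter]
      refine ⟨Finset.mem_univ _, (compat_iff hπ _).2 ?_⟩
      intro V hV W hW hn
      rw [extendColor_mem hV, extendColor_mem hW]
      have : pcomp π V = pcomp π W :=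
        pcomp_eq_of_rtg (rtg_of_nested hπ _ V W le_rfl hV hW hn)
      exact congrArg g (Subtype.ext this)
    · intro χ hχ
      rw [Finset.mem_filter] at hχ
      have hconst := (compat_iff hπ _).1 hχ.2
      funext V
      have h1 := (prep_spec (Finset.mem_image_of_mem (pcomp π) V.2)).1
      have h2 := (prep_spec (Finset.mem_image_of_mem (pcomp π) V.2)).2
      have hmem : prep π (pcomp π V.1) ∈ pcomp π V.1 := by
        have hh := pcomp_mem_self h1
        rw [h2] at hh
        exact hh
      have hrtg := (mem_pcomp.1 hmem).2
      have := color_eq_of_rtg hconst hrtg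
      rw [extendColor_mem V.2, extendColor_mem h1] at this
      exact this.symm
    · intro g _
      funext τ
      have h2 := (prep_spec τ.2).2
      exact congrArg g (Subtype.ext h2)
  rw [key]
  simp [Fintype.card_fun]

open Classical in
theorem rhs_eval {N : ℕ} [NeZero N] {π : Blocks} (hπ : IsNC π) (a : Blocks → ℝ) :
    cumulantRHS N {s : List (Fin N) | s = [] ∨ ∃ j : Fin N, s = [j]} a π =
      ((N : ℝ) ^ (pcomps π).card * ∏ τ ∈ pcomps π, a τ) / (N : ℝ) ^ π.card := by
  rw [cumulantRHS]
  congr 1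
  have hcongr : ∀ χ : {V : Finset ℕ // V ∈ π} → Fin N,
      (if WeaklyCompatible {s : List (Fin N) | s = [] ∨ ∃ j : Fin N, s = [j]} π
          (extendColor π χ) then
        ∏ τ ∈ components π (extendColor π χ), a τ
      else 0) =
      (if WeaklyCompatible {s : List (Fin N) | s = [] ∨ ∃ j : Fin N, s = [j]} π
          (extendColor π χ) then ∏ τ ∈ pcomps π, a τ else 0) := by
    intro χ
    split
    · rename_i h
      rw [components_eq_pcomps ((compat_iff hπ _).1 h)]
    · rfl
  rw [Finset.sum_congr rfl (fun χ _ => hcongr χ), ← Finset.sum_filter,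
    Finset.sum_const, card_compat hπ, nsmul_eq_mul, Nat.cast_pow]

theorem IsNC.subset' {π σ : Blocks} (hπ : IsNC π) (h : σ ⊆ π) : IsNC σ :=
  ⟨fun B hB => hπ.1 B (h hB),
   fun B hB C hC hne => hπ.2.1 B (h hB) C (h hC) hne,
   fun B hB C hC hne => hπ.2.2 B (h hB) C (h hC) hne⟩

theorem no_nest_of_interval {π : Blocks} (hπ : IsNC π) (hint : IsIntervalPart π)
    {V W : Finset ℕ} (hV : V ∈ π) (hW : W ∈ π) : ¬ NestedIn V W := by
  rintro ⟨j, hj, k, hk, hb⟩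
  obtain ⟨v, hv⟩ := hπ.1 V hV
  rcases eq_or_ne V W with rfl | hne
  · exact lt_irrefl j (hb j hj).1
  · have hvy : v ∈ π.biUnion id := Finset.mem_biUnion.2 ⟨V, hV, hv⟩
    have : v ∈ W := hint W hW j hj k hk v hvy (le_of_lt (hb v hv).1) (le_of_lt (hb v hv).2)
    exact Finset.disjoint_left.1 (hπ.2.1 V hV W hW hne) hv this

theorem singleton_NC {π : Blocks} (hπ : IsNC π) {V : Finset ℕ} (hV : V ∈ π) :
    IsNC ({V} : Blocks) := by
  refine ⟨fun B hB => ?_, fun B hB C hC hne => ?_, fun B hB C hC hne => ?_⟩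
  · rw [Finset.mem_singleton] at hB; exact hB ▸ hπ.1 V hV
  · rw [Finset.mem_singleton] at hB hC; exact absurd (hB.trans hC.symm) hne
  · rw [Finset.mem_singleton] at hB hC; exact absurd (hB.trans hC.symm) hne

theorem pcomps_of_interval {π : Blocks} (hπ : IsNC π) (hint : IsIntervalPart π) :
    pcomps π = π.image (fun V => ({V} : Blocks)) := by
  have hnoadj : ∀ Y Z : Finset ℕ, ¬ AdjRel π Y Z := by
    rintro Y Z ⟨hY, hZ, himm | himm⟩
    · exact no_nest_of_interval hπ hint hY hZ himm.1
    · exact no_nest_of_interval hπ hint hZ hY himm.1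
  refine Finset.image_congr (fun V hV => ?_)
  ext X
  rw [mem_pcomp, Finset.mem_singleton]
  constructor
  · rintro ⟨hX, hrtg⟩
    exact (Relation.reflTransGen_iff_eq (fun b => hnoadj V b)).1 hrtg
  · rintro rfl
    exact ⟨hV, Relation.ReflTransGen.refl⟩

theorem a_interval {N : ℕ} [NeZero N] (a : Blocks → ℝ)
    (ha : SatisfiesFP N {s : List (Fin N) | s = [] ∨ ∃ j : Fin N, s = [j]} a)
    {π : Blocks} (hπ : IsNC π) (hint : IsIntervalPart π) : a π = 1 := by
  have hNpos : (0 : ℝ) < (N : ℝ) := by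
    exact_mod_cast Nat.pos_of_ne_zero (NeZero.ne N)
  have hpc := pcomps_of_interval hπ hint
  have hcard : (pcomps π).card = π.card := by
    rw [hpc]
    exact Finset.card_image_of_injective π Finset.singleton_injective
  have hprod : ∏ τ ∈ pcomps π, a τ = 1 := by
    rw [hpc, Finset.prod_image (fun x _ y _ h => Finset.singleton_injective h)]
    exact Finset.prod_eq_one (fun V hV => ha.1 {V} (singleton_NC hπ hV) (Finset.card_singleton V))
  rw [ha.2 π hπ, rhs_eval hπ a, hcard, hprod, mul_one,
    div_self (pow_ne_zero _ (ne_of_gt hNpos))]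

open Classical in
theorem stmt11' {N : ℕ} [NeZero N] (hN : 2 ≤ N)
    (a : Blocks → ℝ)
    (ha : SatisfiesFP N {s : List (Fin N) | s = [] ∨ ∃ j : Fin N, s = [j]} a) :
    ∀ π : Blocks, IsNC π → a π = if IsIntervalPart π then 1 else 0 := by
  have hNpos : (0 : ℝ) < (N : ℝ) := by positivity
  have key : ∀ n (π : Blocks), π.card ≤ n → IsNC π →
      a π = if IsIntervalPart π then 1 else 0 := by
    intro n
    induction n with
    | zero =>
      intro π hcard hπ
      have : π = ∅ := Finset.card_eq_zero.1 (Nat.le_zero.1 hcard)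
      subst this
      have hI : IsIntervalPart (∅ : Blocks) := fun B hB => absurd hB (Finset.notMem_empty B)
      rw [if_pos hI]
      exact a_interval a ha hπ hI
    | succ n ih =>
      intro π hcard hπ
      by_cases hint : IsIntervalPart π
      · rw [if_pos hint]; exact a_interval a ha hπ hint
      · rw [if_neg hint]
        -- extract a nested pair V, W ∈ π
        rw [IsIntervalPart] at hint
        push_neg at hint
        obtain ⟨B, hB, x, hx, z, hz, y, hy, hxy, hyz, hyB⟩ := hint
        obtain ⟨C, hC, hyC⟩ := Finset.mem_biUnion.1 hy
        have hyC : y ∈ C := hyC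
        have hCB : C ≠ B := fun h => hyB (h ▸ hyC)
        have hdisj := hπ.2.1 C hC B hB hCB
        have hxy' : x < y := lt_of_le_of_ne hxy (fun h => hyB (h ▸ hx))
        have hyz' : y < z := lt_of_le_of_ne hyz (fun h => hyB (h.symm ▸ hz))
        have hn : NestedIn C B := by
          refine ⟨x, hx, z, hz, fun c hc => ⟨?_, ?_⟩⟩
          · by_contra hcon
            push_neg at hcon
            have : c < x := lt_of_le_of_ne hcon
              (fun h => Finset.disjoint_left.1 hdisj hc (h ▸ hx))
            exact hπ.2.2 C hC B hB hCB ⟨c, x, y, z, this, hxy', hyz', hc, hyC, hx, hz⟩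
          · by_contra hcon
            push_neg at hcon
            have : z < c := lt_of_le_of_ne hcon
              (fun h => Finset.disjoint_left.1 hdisj hc (h.symm ▸ hz))
            exact hπ.2.2 B hB C hC hCB.symm ⟨x, y, z, c, hxy', hyz', this, hx, hz, hyC, hc⟩
        set V := C with hVdef
        set W := B with hWdef
        have hV : V ∈ π := hC
        have hW : W ∈ π := hB
        -- the component of V
        set τ₀ := pcomp π V with hτ₀def
        have hVτ : V ∈ τ₀ := pcomp_mem_self hV
        have hWτ : W ∈ τ₀ := mem_pcomp.2 ⟨hW, rtg_of_nested hπ _ V W le_rfl hV hW hn⟩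
        have hτ₀mem : τ₀ ∈ pcomps π := Finset.mem_image_of_mem _ hV
        have hτ₀sub : τ₀ ⊆ π := pcomp_subset V
        have hτ₀NC : IsNC τ₀ := hπ.subset' hτ₀sub
        have hτ₀notint : ¬ IsIntervalPart τ₀ := by
          intro h
          obtain ⟨j, hj, k, hk, hb⟩ := hn
          obtain ⟨v, hv⟩ := hπ.1 V hV
          have : v ∈ W := h W hWτ j hj k hk v (Finset.mem_biUnion.2 ⟨V, hVτ, hv⟩)
            (le_of_lt (hb v hv).1) (le_of_lt (hb v hv).2)
          exact Finset.disjoint_left.1 hdisj hv this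
        have heq := (ha.2 π hπ).trans (rhs_eval hπ a)
        rcases eq_or_ne τ₀ π with hτπ | hτπ
        · -- single component: a π = N * a π / N^|π|
          have hpc : pcomps π = {π} := by
            refine Finset.eq_singleton_iff_unique_mem.2 ⟨hτπ ▸ hτ₀mem, ?_⟩
            intro σ hσ
            obtain ⟨U, hU, rfl⟩ := Finset.mem_image.1 hσ
            have hUτ : U ∈ τ₀ := hτπ ▸ hU
            have := pcomp_eq_of_rtg (mem_pcomp.1 hUτ).2
            rw [← this]
            exact hτπ
          have h2card : 2 ≤ π.card := Finset.one_lt_card.2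
            ⟨V, hV, W, hW, fun h => NestedIn.irrefl' (hπ.1 V hV) (h ▸ hn)⟩
          rw [hpc] at heq
          simp only [Finset.card_singleton, Finset.prod_singleton, pow_one] at heq
          have hne : (N : ℝ) ^ π.card ≠ 0 := pow_ne_zero _ (ne_of_gt hNpos)
          rw [eq_div_iff hne] at heq
          have hNlt : (N : ℝ) < (N : ℝ) ^ π.card := by
            calc (N : ℝ) = (N : ℝ) ^ 1 := (pow_one _).symm
            _ < (N : ℝ) ^ π.card := by
                apply pow_lt_pow_right₀ (by exact_mod_cast hN) (by omega)
          have h0 : a π * ((N : ℝ) ^ π.card - N) = 0 := by linear_combination heq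
          rcases mul_eq_zero.1 h0 with h | h
          · exact h
          · linarith
        · -- smaller non-interval component gives 0
          have hssub : τ₀ ⊂ π := Finset.ssubset_iff_subset_ne.2 ⟨hτ₀sub, hτπ⟩
          have hcard' : τ₀.card ≤ n := by
            have := Finset.card_lt_card hssub
            omega
          have h0 : a τ₀ = 0 := by
            rw [ih τ₀ hcard' hτ₀NC, if_neg hτ₀notint]
          rw [heq, Finset.prod_eq_zero hτ₀mem h0, mul_zero, zero_div]
  exact fun π hπ => key π.card π le_rfl hπ

open Classical in
theorem stmt11 {N : ℕ} [NeZero N] (hN : 2 ≤ N)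
    (a : Blocks → ℝ)
    (ha : SatisfiesFP N {s : List (Fin N) | s = [] ∨ ∃ j : Fin N, s = [j]} a) :
    ∀ π : Blocks, IsNC π → a π = if IsIntervalPart π then 1 else 0 :=
  stmt11' hN a ha
end

section
/- For the monotone tree T_{N,mono} ⊆ T_{N,free} of strictly decreasing strings on [N] (with N ≥ 2), the cumulant coefficients satisfy α_{T_{N,mono}, π} = |Ord(π)| / |π|!, where Ord(π) is the set of total orders on the blocks of π extending the nesting partial order ≺. Equivalently, α_{T_{N,mono}, π} equals the Lebesgue volume of {t ∈ (0,1]^π : V ≺ W ⟹ t_V < t_W}. -/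
set_option linter.unusedSectionVars false
set_option linter.unusedVariables false

theorem List.chain'_cons' {α : Type*} {R : α → α → Prop} {x : α} {l : List α} :
    List.Chain' R (x :: l) ↔ (∀ y ∈ l.head?, R x y) ∧ List.Chain' R l :=
  List.isChain_cons

theorem List.chain'_iff_pairwise {α : Type*} {R : α → α → Prop} [IsTrans α R] {l : List α} :
    List.Chain' R l ↔ List.Pairwise R l :=
  List.isChain_iff_pairwise

theorem red_head {α : Type*} [DecidableEq α] (b : α) (t : List α) :
    (red (b :: t)).head? = some b := by
  induction t generalizing b with
  | nil => rfl
  | cons c t ih =>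
      rw [red]
      split
      · next h => rw [h]; exact ih c
      · rfl

theorem red_chain' {N : ℕ} (l : List (Fin N)) :
    (red l).Chain' (· > ·) ↔ l.Chain' (· ≥ ·) := by
  match l with
  | [] => simp [red, List.Chain']
  | [a] => simp [red, List.Chain']
  | a :: b :: t =>
      rw [red]
      split
      · next h =>
          subst h
          rw [red_chain' (a :: t)]
          conv_rhs => rw [List.chain'_cons']
          simp
      · next h =>
          rw [List.chain'_cons', red_chain' (b :: t), red_head]
          conv_rhs => rw [List.chain'_cons']
          simp only [Option.mem_def, Option.some.injEq, forall_eq', List.head?_cons]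
          constructor
          · rintro ⟨h1, h2⟩; exact ⟨le_of_lt h1, h2⟩
          · rintro ⟨h1, h2⟩; exact ⟨lt_of_le_of_ne h1 (Ne.symm h), h2⟩
section P2
variable {π : Blocks}

theorem NestedIn.trans {U V W : Finset ℕ} (h1 : NestedIn U V) (h2 : NestedIn V W) :
    NestedIn U W := by
  obtain ⟨j, hj, k, hk, h⟩ := h1
  obtain ⟨j', hj', k', hk', h'⟩ := h2
  exact ⟨j', hj', k', hk', fun x hx =>
    ⟨lt_trans (h' j hj).1 (h x hx).1, lt_trans (h x hx).2 (h' k hk).2⟩⟩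

theorem NestedIn.asymm {V W : Finset ℕ} (h1 : NestedIn V W) (h2 : NestedIn W V) : False := by
  obtain ⟨j, hj, k, hk, h⟩ := h1
  obtain ⟨j', hj', k', hk', h'⟩ := h2
  exact lt_asymm (h j' hj').1 (h' j hj).1

theorem NestedIn.irrefl {V : Finset ℕ} (h : NestedIn V V) : False := h.asymm h

/-- If one element of `W` lies strictly between two elements of `X`, then all of `W`
does (for distinct blocks of a non-crossing partition). -/
theorem between_all (hNC : IsNC π) {W X : Finset ℕ} (hW : W ∈ π) (hX : X ∈ π)
    (hne : W ≠ X) {a b c : ℕ} (ha : a ∈ X) (hb : b ∈ X) (hc : c ∈ W)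
    (h1 : a < c) (h2 : c < b) : NestedIn W X := by
  have hdisj := hNC.2.1 W hW X hX hne
  refine ⟨a, ha, b, hb, fun w hw => ⟨?_, ?_⟩⟩
  · by_contra hcon
    push_neg at hcon
    have hwa : w < a := lt_of_le_of_ne hcon (fun h => (Finset.disjoint_left.mp hdisj hw) (h ▸ ha))
    exact hNC.2.2 W hW X hX hne ⟨w, a, c, b, hwa, h1, h2, hw, hc, ha, hb⟩
  · by_contra hcon
    push_neg at hcon
    have hbw : b < w := lt_of_le_of_ne hcon (fun h => (Finset.disjoint_left.mp hdisj hw) (h.symm ▸ hb))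
    exact hNC.2.2 X hX W hW hne.symm ⟨a, c, b, w, h1, h2, hbw, ha, hb, hc, hw⟩

/-- Two distinct blocks both "straddling" a point `v` are nested one way or the other. -/
theorem straddle_tricho (hNC : IsNC π) {W X : Finset ℕ} (hW : W ∈ π) (hX : X ∈ π)
    (hne : W ≠ X) {v : ℕ}
    (hvW : ∃ j ∈ W, ∃ k ∈ W, j < v ∧ v < k) (hvX : ∃ j ∈ X, ∃ k ∈ X, j < v ∧ v < k) :
    NestedIn W X ∨ NestedIn X W := by
  obtain ⟨jW, hjW, kW, hkW, hjWv, hvkW⟩ := hvW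
  obtain ⟨jX, hjX, kX, hkX, hjXv, hvkX⟩ := hvX
  have hdisj := hNC.2.1 W hW X hX hne
  rcases lt_trichotomy jW jX with h | h | h
  · exact Or.inr (between_all hNC hX hW hne.symm hjW hkW hjX h (lt_trans hjXv hvkW))
  · exact absurd (h ▸ hjX) (Finset.disjoint_left.mp hdisj hjW)
  · exact Or.inl (between_all hNC hW hX hne hjX hkX hjW h (lt_trans hjWv hvkX))

/-- For `V` nested in `W`, an element of `V` gives straddling witnesses in `W`. -/
theorem NestedIn.straddle {V W : Finset ℕ} (h : NestedIn V W) {v : ℕ} (hv : v ∈ V) :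
    ∃ j ∈ W, ∃ k ∈ W, j < v ∧ v < k := by
  obtain ⟨j, hj, k, hk, h⟩ := h
  exact ⟨j, hj, k, hk, (h v hv).1, (h v hv).2⟩

end P2
section P3
variable {π : Blocks}

open Classical in
/-- The set of blocks of `π` strictly surrounding `V`. -/
noncomputable def surrSet (π : Blocks) (V : Finset ℕ) : Finset (Finset ℕ) :=
  π.filter (fun W => NestedIn V W)

open Classical in
theorem mem_surrSet {V W : Finset ℕ} : W ∈ surrSet π V ↔ W ∈ π ∧ NestedIn V W := by
  simp [surrSet]

/-- Existence of chain lists for blocks of a non-crossing partition. -/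
theorem exists_chainList_s12 (hNC : IsNC π) : ∀ n : ℕ, ∀ V ∈ π, (surrSet π V).card ≤ n →
    ∃ L, IsChainList π V L ∧ ∀ W ∈ L, W ∈ π := by
  intro n
  induction n with
  | zero =>
      intro V hV hcard
      have hS : surrSet π V = ∅ := Finset.card_eq_zero.mp (Nat.le_zero.mp hcard)
      refine ⟨[V], ⟨rfl, ?_, ?_, ?_⟩, ?_⟩
      · intro W
        simp only [List.tail_cons, List.not_mem_nil, false_iff]
        rintro ⟨h1, h2⟩
        have : W ∈ surrSet π V := mem_surrSet.mpr ⟨h1, h2⟩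
        simp [hS] at this
      · simp [List.Chain']
      · simp
      · simpa using hV
  | succ n ih =>
      intro V hV hcard
      rcases Finset.eq_empty_or_nonempty (surrSet π V) with hS | hS
      · exact ih V hV (by simp [hS])
      · -- pick the innermost surrounding block M : the one with the largest min'
        obtain ⟨M, hM, hMmax⟩ := Finset.exists_max_image (surrSet π V)
          (fun B => if h : B.Nonempty then B.min' h else 0) hS
        obtain ⟨hMπ, hVM⟩ := mem_surrSet.mp hM
        have hMne : M.Nonempty := hNC.1 M hMπ
        obtain ⟨v, hv⟩ := (hNC.1 V hV)
        -- M is nested in every other surrounding block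
        have hMin : ∀ X ∈ surrSet π V, X ≠ M → NestedIn M X := by
          intro X hX hneX
          obtain ⟨hXπ, hVX⟩ := mem_surrSet.mp hX
          rcases straddle_tricho hNC hMπ hXπ (fun h => hneX h.symm)
            (hVM.straddle hv) (hVX.straddle hv) with h | h
          · exact h
          · -- X nested in M contradicts maximality of min'
            exfalso
            obtain ⟨j, hjM, k, hkM, hjk⟩ := h
            have hXne : X.Nonempty := hNC.1 X hXπ
            have h1 : M.min' hMne ≤ j := Finset.min'_le _ _ hjM
            have h2 : j < X.min' hXne := (hjk _ (X.min'_mem hXne)).1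
            have := hMmax X hX
            rw [dif_pos hMne, dif_pos hXne] at this
            omega
        -- the surrounding set of M
        have hSM : surrSet π M = (surrSet π V).erase M := by
          ext X
          simp only [mem_surrSet, Finset.mem_erase]
          constructor
          · rintro ⟨hXπ, hMX⟩
            refine ⟨fun h => (h ▸ hMX).irrefl, hXπ, hVM.trans hMX⟩
          · rintro ⟨hne, hXπ, hVX⟩
            exact ⟨hXπ, hMin X (mem_surrSet.mpr ⟨hXπ, hVX⟩) hne⟩
        have hcard' : (surrSet π M).card ≤ n := by
          rw [hSM]
          have := Finset.card_erase_of_mem hM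
          omega
        obtain ⟨L', ⟨hhead, htail, hchain, hnodup⟩, hmem⟩ := ih M hMπ hcard'
        obtain ⟨L'', hL''⟩ : ∃ t, L' = M :: t := by
          cases L' with
          | nil => simp at hhead
          | cons a t => exact ⟨t, by simpa using congrArg (Option.getD · M) hhead⟩
        refine ⟨V :: L', ⟨rfl, ?_, ?_, ?_⟩, ?_⟩
        · intro W
          simp only [List.tail_cons]
          rw [← mem_surrSet]
          constructor
          · intro hW
            rcases (by simpa [hL''] using hW : W = M ∨ W ∈ L'') with h | h
            · exact h ▸ hM
            · have h2 : W ∈ surrSet π M :=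
                mem_surrSet.mpr ((htail W).mp (by simpa [hL''] using h))
              rw [hSM] at h2
              exact Finset.mem_of_mem_erase h2
          · intro hW
            rcases eq_or_ne W M with h | h
            · simp [hL'', h]
            · have : W ∈ surrSet π M := by rw [hSM]; exact Finset.mem_erase.mpr ⟨h, hW⟩
              have := (htail W).mpr (mem_surrSet.mp this)
              simp [hL'']
              right
              simpa [hL''] using this
        · rw [List.chain'_cons']
          refine ⟨?_, hchain⟩
          intro y hy
          rw [hhead] at hy
          cases hy
          exact hVM
        · rw [List.nodup_cons]
          refine ⟨?_, hnodup⟩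
          intro hVL
          rcases (by simpa [hL''] using hVL : V = M ∨ V ∈ L'') with h | h
          · exact (h ▸ hVM).irrefl
          · have := (htail V).mp (by simpa [hL''] using h)
            exact (hVM.trans this.2).irrefl
        · intro W hW
          rcases List.mem_cons.mp hW with h | h
          · exact h ▸ hV
          · exact hmem W h
end P3
section P4
variable {π : Blocks} {N : ℕ}

instance : IsTrans (Finset ℕ) NestedIn := ⟨fun _ _ _ => NestedIn.trans⟩

theorem chainList_mem_pi {V : Finset ℕ} {L : List (Finset ℕ)} (hV : V ∈ π)
    (hL : IsChainList π V L) : ∀ X ∈ L, X ∈ π := by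
  obtain ⟨hhead, htail, _, _⟩ := hL
  intro X hX
  cases L with
  | nil => simp at hX
  | cons a t =>
      have ha : a = V := by simpa using hhead
      rcases List.mem_cons.mp hX with h | h
      · exact h ▸ ha ▸ hV
      · exact ((htail X).mp h).1

theorem wc_iff (hNC : IsNC π) (χ : Finset ℕ → Fin N) :
    WeaklyCompatible {s : List (Fin N) | s.Chain' (· > ·)} π χ ↔
      ∀ V ∈ π, ∀ W ∈ π, NestedIn V W → χ W ≤ χ V := by
  constructor
  · intro h V hV W hW hVW
    obtain ⟨L, hL, _⟩ := exists_chainList_s12 hNC (surrSet π V).card V hV le_rfl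
    have hred := h V hV L hL
    rw [Set.mem_setOf_eq, red_chain', List.chain'_iff_pairwise, List.pairwise_map] at hred
    obtain ⟨t, ht⟩ : ∃ t, L = V :: t := by
      cases L with
      | nil => simp [IsChainList] at hL
      | cons a t => exact ⟨t, by simpa using congrArg (Option.getD · V) hL.1⟩
    have hWt : W ∈ t := by
      have := (hL.2.1 W).mpr ⟨hW, hVW⟩
      simpa [ht] using this
    rw [ht] at hred
    exact (List.pairwise_cons.mp hred).1 W hWt
  · intro h V hV L hL
    rw [Set.mem_setOf_eq, red_chain', List.chain'_iff_pairwise, List.pairwise_map]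
    have hpw : L.Pairwise NestedIn := List.chain'_iff_pairwise.mp hL.2.2.1
    exact hpw.imp_of_mem (fun {X Y} hX hY hN =>
      h X (chainList_mem_pi hV hL X hX) Y (chainList_mem_pi hV hL Y hY) hN)

theorem sameComp_symm {χ : Finset ℕ → Fin N} {V W : Finset ℕ}
    (h : sameComp π χ V W) : sameComp π χ W V := by
  refine (@Relation.ReflTransGen.symmetric _ _ ⟨?_⟩).symm _ _ h
  rintro X Y ⟨h1, h2, h3, h4⟩
  exact ⟨h2, h1, h3.symm, h4.symm⟩

theorem sameComp_color {χ : Finset ℕ → Fin N} {V W : Finset ℕ}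
    (h : sameComp π χ V W) : χ V = χ W := by
  induction h with
  | refl => rfl
  | tail _ h ih => exact ih.trans h.2.2.2

theorem sameComp_mem {χ : Finset ℕ → Fin N} {V W : Finset ℕ} (hV : V ∈ π)
    (h : sameComp π χ V W) : W ∈ π := by
  induction h with
  | refl => exact hV
  | tail _ h _ => exact h.2.1

open Classical in
theorem mem_component {χ : Finset ℕ → Fin N} {V W : Finset ℕ} :
    W ∈ component π χ V ↔ W ∈ π ∧ sameComp π χ V W := by
  simp [component]

theorem component_eq_of_sameComp {χ : Finset ℕ → Fin N} {V W : Finset ℕ}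
    (h : sameComp π χ V W) : component π χ V = component π χ W := by
  ext X
  rw [mem_component, mem_component]
  exact and_congr_right (fun _ =>
    ⟨fun hX => ((sameComp_symm h).trans hX), fun hX => h.trans hX⟩)

open Classical in
theorem mem_components {χ : Finset ℕ → Fin N} {τ : Blocks} :
    τ ∈ components π χ ↔ ∃ V ∈ π, component π χ V = τ := by
  simp [components]

open Classical in
/-- The nesting-between set. -/
noncomputable def betwSet (π : Blocks) (V W : Finset ℕ) : Finset (Finset ℕ) :=
  π.filter (fun X => NestedIn V X ∧ NestedIn X W)

open Classical in
theorem mem_betwSet {V W X : Finset ℕ} :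
    X ∈ betwSet π V W ↔ X ∈ π ∧ NestedIn V X ∧ NestedIn X W := by simp [betwSet]

/-- Comparable blocks of the same color are in the same component (B5). -/
theorem nested_sameComp (χ : Finset ℕ → Fin N)
    (hOR : ∀ V ∈ π, ∀ W ∈ π, NestedIn V W → χ W ≤ χ V) :
    ∀ n : ℕ, ∀ V W : Finset ℕ, V ∈ π → W ∈ π → NestedIn V W → χ V = χ W →
      (betwSet π V W).card ≤ n → sameComp π χ V W := by
  intro n
  induction n with
  | zero =>
      intro V W hV hW hVW hχ hcard
      have hB : betwSet π V W = ∅ := Finset.card_eq_zero.mp (Nat.le_zero.mp hcard)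
      refine Relation.ReflTransGen.single ⟨hV, hW, Or.inl ⟨hVW, ?_⟩, hχ⟩
      rintro ⟨X, hX, h1, h2⟩
      have : X ∈ betwSet π V W := mem_betwSet.mpr ⟨hX, h1, h2⟩
      simp [hB] at this
  | succ n ih =>
      intro V W hV hW hVW hχ hcard
      rcases Finset.eq_empty_or_nonempty (betwSet π V W) with hB | ⟨X, hX⟩
      · refine Relation.ReflTransGen.single ⟨hV, hW, Or.inl ⟨hVW, ?_⟩, hχ⟩
        rintro ⟨X, hX, h1, h2⟩
        have : X ∈ betwSet π V W := mem_betwSet.mpr ⟨hX, h1, h2⟩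
        simp [hB] at this
      · obtain ⟨hXπ, hVX, hXW⟩ := mem_betwSet.mp hX
        have hχVX : χ V = χ X := le_antisymm (hχ ▸ hOR X hXπ W hW hXW) (hOR V hV X hXπ hVX)
        have hsub1 : betwSet π V X ⊆ (betwSet π V W).erase X := by
          intro Y hY
          obtain ⟨hYπ, h1, h2⟩ := mem_betwSet.mp hY
          exact Finset.mem_erase.mpr ⟨fun h => (h ▸ h2).irrefl,
            mem_betwSet.mpr ⟨hYπ, h1, h2.trans hXW⟩⟩
        have hsub2 : betwSet π X W ⊆ (betwSet π V W).erase X := by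
          intro Y hY
          obtain ⟨hYπ, h1, h2⟩ := mem_betwSet.mp hY
          exact Finset.mem_erase.mpr ⟨fun h => (h ▸ h1).irrefl,
            mem_betwSet.mpr ⟨hYπ, hVX.trans h1, h2⟩⟩
        have hcarde : ((betwSet π V W).erase X).card ≤ n := by
          have := Finset.card_erase_of_mem hX
          omega
        exact (ih V X hV hXπ hVX hχVX
            (le_trans (Finset.card_le_card hsub1) hcarde)).trans
          (ih X W hXπ hW hXW (hχVX ▸ hχ)
            (le_trans (Finset.card_le_card hsub2) hcarde))

theorem components_nonempty {χ : Finset ℕ → Fin N} {τ : Blocks}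
    (hτ : τ ∈ components π χ) : ∃ V ∈ π, V ∈ τ := by
  obtain ⟨V, hV, rfl⟩ := mem_components.mp hτ
  exact ⟨V, hV, mem_component.mpr ⟨hV, Relation.ReflTransGen.refl⟩⟩

theorem components_subset {χ : Finset ℕ → Fin N} {τ : Blocks}
    (hτ : τ ∈ components π χ) : τ ⊆ π := by
  obtain ⟨V, hV, rfl⟩ := mem_components.mp hτ
  intro X hX
  exact (mem_component.mp hX).1

theorem components_isNC (hNC : IsNC π) {χ : Finset ℕ → Fin N} {τ : Blocks}
    (hτ : τ ∈ components π χ) : IsNC τ := by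
  have hsub := components_subset hτ
  exact ⟨fun B hB => hNC.1 B (hsub hB),
    fun B hB C hC hne => hNC.2.1 B (hsub hB) C (hsub hC) hne,
    fun B hB C hC hne => hNC.2.2 B (hsub hB) C (hsub hC) hne⟩

theorem component_eq_of_mem {χ : Finset ℕ → Fin N} {τ : Blocks} {V : Finset ℕ}
    (hτ : τ ∈ components π χ) (hV : V ∈ τ) : component π χ V = τ := by
  obtain ⟨U, hU, rfl⟩ := mem_components.mp hτ
  exact (component_eq_of_sameComp (mem_component.mp hV).2).symm

theorem sameComp_of_mem_component {χ : Finset ℕ → Fin N} {τ : Blocks} {V W : Finset ℕ}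
    (hτ : τ ∈ components π χ) (hV : V ∈ τ) (hW : W ∈ τ) : sameComp π χ V W := by
  have h1 := component_eq_of_mem hτ hV
  exact (mem_component.mp (h1 ▸ hW)).2

theorem components_eq_singleton {χ : Finset ℕ → Fin N} (hπ : π ∈ components π χ) :
    components π χ = {π} := by
  apply Finset.eq_singleton_iff_nonempty_unique_mem.mpr
  refine ⟨⟨π, hπ⟩, ?_⟩
  intro τ hτ
  obtain ⟨V, hV, hVτ⟩ := components_nonempty hτ
  have h1 := component_eq_of_mem hτ hVτ
  have h2 := component_eq_of_mem hπ (by exact hV)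
  · rw [← h1, h2]

end P4
section P5
variable {A : Type*} [Fintype A] [DecidableEq A] {K : ℕ}

/-- Standardization of a bijection `A ≃ Fin K` to a subset `s`. -/
noncomputable def stdize (h : A ≃ Fin K) (s : Finset A) : {x // x ∈ s} ≃ Fin s.card :=
  (Equiv.subtypeEquiv h (fun a => by
      constructor
      · intro ha; exact Finset.mem_image_of_mem _ ha
      · intro ha
        obtain ⟨x, hx, hxa⟩ := Finset.mem_image.mp ha
        rwa [← h.injective hxa])).trans
    ((s.image (fun x => h x)).orderIsoOfFin
      (Finset.card_image_of_injective s h.injective)).symm.toEquiv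

theorem stdize_lt_iff (h : A ≃ Fin K) (s : Finset A) (x y : {x // x ∈ s}) :
    stdize h s x < stdize h s y ↔ h x.1 < h y.1 := by
  rw [stdize]
  simp only [Equiv.trans_apply, OrderIso.toEquiv_symm, RelIso.coe_fn_toEquiv]
  exact OrderIso.lt_iff_lt ((s.image (fun x => h x)).orderIsoOfFin
    (Finset.card_image_of_injective s h.injective)).symm

theorem stdize_unique (h : A ≃ Fin K) (s : Finset A) (g : {x // x ∈ s} ≃ Fin s.card)
    (hg : ∀ x y, g x < g y ↔ h x.1 < h y.1) : g = stdize h s := by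
  have hsm : StrictMono (g.symm.trans (stdize h s)) := by
    intro i j hij
    rw [Equiv.trans_apply, Equiv.trans_apply, stdize_lt_iff, ← hg, g.apply_symm_apply,
      g.apply_symm_apply]
    exact hij
  have : (OrderIso.ofRelIsoLT (RelIso.mk (g.symm.trans (stdize h s))
      (fun {a b} => hsm.lt_iff_lt))) = OrderIso.refl (Fin s.card) := Subsingleton.elim _ _
  apply Equiv.ext
  intro x
  have := congrArg (fun (q : Fin s.card ≃o Fin s.card) => q (g x)) this
  simpa using this.symm
open Finset in
theorem splitting {ι : Type*} [Fintype ι] [DecidableEq ι] (P : ι → Finset A)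
    (idx : A → ι) (hidx : ∀ x, x ∈ P (idx x)) (huniq : ∀ x i, x ∈ P i → i = idx x)
    (hK : Fintype.card A = K)
    (G : ∀ i, Finset ({x // x ∈ P i} ≃ Fin (P i).card)) :
    (Finset.univ.filter
        (fun h : A ≃ Fin K => ∀ i, stdize h (P i) ∈ G i)).card * ∏ i, Nat.factorial (P i).card =
      Nat.factorial K * ∏ i, (G i).card := by
  classical
  set T := ∀ i, ({x // x ∈ P i} ≃ Fin (P i).card) with hT
  set Ψ : (A ≃ Fin K) → T := fun h i => stdize h (P i) with hΨ
  set F : T → T → A → A := fun g g' x => ((g (idx x)).symm (g' (idx x) ⟨x, hidx x⟩)).1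
    with hF
  have key : ∀ (g g' : T) (i : ι) (x : A) (hx : x ∈ P i), idx x = i →
      F g g' x = ((g i).symm (g' i ⟨x, hx⟩)).1 := by
    intro g g' i x hx hix
    subst hix
    rfl
  have hFmem : ∀ (g g' : T) (x : A), F g g' x ∈ P (idx x) := by
    intro g g' x
    exact ((g (idx x)).symm (g' (idx x) ⟨x, hidx x⟩)).2
  have hidxF : ∀ (g g' : T) (x : A), idx (F g g' x) = idx x :=
    fun g g' x => (huniq _ _ (hFmem g g' x)).symm
  have hFinv : ∀ (g g' : T) (x : A), F g' g (F g g' x) = x := by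
    intro g g' x
    rw [key g' g (idx x) (F g g' x) (hFmem g g' x) (hidxF g g' x)]
    have h2 : (⟨F g g' x, hFmem g g' x⟩ : {y // y ∈ P (idx x)}) =
        (g (idx x)).symm (g' (idx x) ⟨x, hidx x⟩) :=
      Subtype.ext (key g g' (idx x) x (hidx x) rfl)
    rw [h2, Equiv.apply_symm_apply, Equiv.symm_apply_apply]
  set glue : T → T → (A ≃ A) := fun g g' =>
    ⟨F g g', F g' g, fun x => hFinv g g' x, fun x => hFinv g' g x⟩ with hglue
  -- fibers of Ψ are equinumerous
  have hfiber : ∀ g g' : T,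
      (univ.filter (fun h => Ψ h = g)).card = (univ.filter (fun h => Ψ h = g')).card := by
    have main : ∀ g g' : T, ∀ h : A ≃ Fin K, Ψ h = g → Ψ ((glue g g').trans h) = g' := by
      intro g g' h hh
      funext i
      refine (stdize_unique _ _ _ ?_).symm
      intro x y
      have hcoe : ∀ z : {x // x ∈ P i}, (glue g g') z.1 = ((g i).symm (g' i z)).1 := by
        intro z
        show F g g' z.1 = _
        rw [key g g' i z.1 z.2 (huniq z.1 i z.2).symm]
      show g' i x < g' i y ↔ h ((glue g g') x.1) < h ((glue g g') y.1)
      rw [hcoe x, hcoe y]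
      have hlt := stdize_lt_iff h (P i) ((g i).symm (g' i x)) ((g i).symm (g' i y))
      have hgi : stdize h (P i) = g i := congrFun hh i
      rw [hgi, Equiv.apply_symm_apply, Equiv.apply_symm_apply] at hlt
      exact hlt
    intro g g'
    apply Finset.card_bij (fun h _ => (glue g g').trans h)
    · intro h hh
      simp only [mem_filter, mem_univ, true_and] at hh ⊢
      exact main g g' h hh
    · intro h1 hh1 h2 hh2 heq
      apply Equiv.ext
      intro x
      have h := congrArg (fun (e : A ≃ Fin K) => e ((glue g g').symm x)) heq
      simpa using h
    · intro h hh
      simp only [mem_filter, mem_univ, true_and] at hh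
      refine ⟨(glue g' g).trans h, ?_, ?_⟩
      · simp only [mem_filter, mem_univ, true_and]
        exact main g' g h hh
      · apply Equiv.ext
        intro x
        show h (F g' g (F g g' x)) = h x
        rw [hFinv]
  -- count everything
  obtain ⟨g₀⟩ : Nonempty T := ⟨fun i => Fintype.equivFinOfCardEq (Fintype.card_coe (P i))⟩
  set c := (univ.filter (fun h => Ψ h = g₀)).card with hc
  have grand : Nat.factorial K = (∏ i, Nat.factorial (P i).card) * c := by
    have h1 : (univ : Finset (A ≃ Fin K)).card =
        ∑ g ∈ (univ : Finset T), (univ.filter (fun h => Ψ h = g)).card :=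
      Finset.card_eq_sum_card_fiberwise (fun x _ => mem_univ _)
    have h2 : (univ : Finset (A ≃ Fin K)).card = Nat.factorial K := by
      rw [Finset.card_univ, Fintype.card_equiv (Fintype.equivFinOfCardEq hK), hK]
    have h3 : ∀ g ∈ (univ : Finset T), (univ.filter (fun h => Ψ h = g)).card = c :=
      fun g _ => hfiber g g₀
    rw [Finset.sum_congr rfl h3, Finset.sum_const, smul_eq_mul] at h1
    rw [← h2, h1, Finset.card_univ]
    congr 1
    show Fintype.card (∀ i, ({x // x ∈ P i} ≃ Fin (P i).card)) = _
    rw [Fintype.card_pi]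
    exact Finset.prod_congr rfl (fun i _ =>
      by rw [Fintype.card_equiv (Fintype.equivFinOfCardEq (Fintype.card_coe (P i))),
        Fintype.card_coe])
  have good : (univ.filter (fun h : A ≃ Fin K => ∀ i, stdize h (P i) ∈ G i)).card =
      (∏ i, (G i).card) * c := by
    have h1 : (univ.filter (fun h : A ≃ Fin K => ∀ i, stdize h (P i) ∈ G i)).card =
        ∑ g ∈ Fintype.piFinset G,
          ((univ.filter (fun h : A ≃ Fin K => ∀ i, stdize h (P i) ∈ G i)).filter
            (fun h => Ψ h = g)).card := by
      apply Finset.card_eq_sum_card_fiberwise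
      intro h hh
      simp only [coe_filter, Set.mem_setOf_eq, mem_filter, mem_univ, true_and] at hh
      exact Fintype.mem_piFinset.mpr hh
    have h2 : ∀ g ∈ Fintype.piFinset G,
        ((univ.filter (fun h : A ≃ Fin K => ∀ i, stdize h (P i) ∈ G i)).filter
            (fun h => Ψ h = g)).card = c := by
      intro g hg
      rw [hc, ← hfiber g g₀]
      congr 1
      ext h
      simp only [mem_filter, mem_univ, true_and, and_iff_right_iff_imp]
      intro hh i
      have : stdize h (P i) = g i := congrFun hh i
      rw [this]
      exact Fintype.mem_piFinset.mp hg i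
    rw [h1, Finset.sum_congr rfl h2, Finset.sum_const, smul_eq_mul, Fintype.card_piFinset]
  rw [good, grand]
  ring
end P5
section P6

open Classical in
/-- The linear extensions of the nesting order on `ρ`. -/
noncomputable def LExtF (ρ : Blocks) : Finset ({V : Finset ℕ // V ∈ ρ} ≃ Fin ρ.card) :=
  Finset.univ.filter (fun f =>
    ∀ V W : {V : Finset ℕ // V ∈ ρ}, NestedIn W.1 V.1 → f V < f W)

/-- The number of linear extensions of the nesting order on `ρ`. -/
noncomputable def eCount (ρ : Blocks) : ℕ := (LExtF ρ).card

open Classical in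
/-- Bijections which are linear extensions on every `χ`-component. -/
noncomputable def GoodF {N : ℕ} [NeZero N] (π : Blocks)
    (χ : {V : Finset ℕ // V ∈ π} → Fin N) :
    Finset ({V : Finset ℕ // V ∈ π} ≃ Fin π.card) :=
  Finset.univ.filter (fun h => ∀ V W : {V : Finset ℕ // V ∈ π},
    sameComp π (extendColor π χ) V.1 W.1 → NestedIn W.1 V.1 → h V < h W)

open Classical Finset in
theorem good_split {N : ℕ} [NeZero N] (π : Blocks)
    (χ : {V : Finset ℕ // V ∈ π} → Fin N) :
    (GoodF π χ).card * ∏ τ ∈ components π (extendColor π χ), Nat.factorial τ.card =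
      Nat.factorial π.card * ∏ τ ∈ components π (extendColor π χ), eCount τ := by
  set χh := extendColor π χ with hχh
  set P : {τ : Blocks // τ ∈ components π χh} → Finset {V : Finset ℕ // V ∈ π} :=
    fun τ => Finset.univ.filter (fun V => V.1 ∈ τ.1) with hP
  set idx : {V : Finset ℕ // V ∈ π} → {τ : Blocks // τ ∈ components π χh} :=
    fun V => ⟨component π χh V.1, mem_components.mpr ⟨V.1, V.2, rfl⟩⟩ with hidxdef
  have hidx : ∀ V, V ∈ P (idx V) := by
    intro V
    simp only [hP, mem_filter, mem_univ, true_and]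
    exact mem_component.mpr ⟨V.2, Relation.ReflTransGen.refl⟩
  have huniq : ∀ V i, V ∈ P i → i = idx V := by
    intro V i hV
    simp only [hP, mem_filter, mem_univ, true_and] at hV
    exact Subtype.ext (component_eq_of_mem i.2 hV).symm
  set G : ∀ i, Finset ({x // x ∈ P i} ≃ Fin (P i).card) := fun i =>
    Finset.univ.filter (fun s => ∀ x y : {x // x ∈ P i},
      NestedIn y.1.1 x.1.1 → s x < s y) with hG
  have hsplit := splitting P idx hidx huniq (Fintype.card_coe π) G
  -- identify the filtered set with `GoodF`
  have hidcard : (Finset.univ.filter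
      (fun h : {V : Finset ℕ // V ∈ π} ≃ Fin π.card =>
        ∀ i, stdize h (P i) ∈ G i)).card = (GoodF π χ).card := by
    congr 1
    ext h
    simp only [GoodF, mem_filter, mem_univ, true_and, hG]
    constructor
    · intro hstd V W hsc hn
      have hWP : W ∈ P (idx V) := by
        simp only [hP, mem_filter, mem_univ, true_and]
        exact mem_component.mpr ⟨W.2, hsc⟩
      have := hstd (idx V)
      have h2 := this ⟨V, hidx V⟩ ⟨W, hWP⟩ hn
      rwa [stdize_lt_iff] at h2
    · intro hgood i
      intro x y hn
      rw [stdize_lt_iff]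
      refine hgood x.1 y.1 ?_ hn
      have hx : x.1.1 ∈ i.1 := by
        have := x.2; simp only [hP, mem_filter, mem_univ, true_and] at this; exact this
      have hy : y.1.1 ∈ i.1 := by
        have := y.2; simp only [hP, mem_filter, mem_univ, true_and] at this; exact this
      exact sameComp_of_mem_component i.2 hx hy
  -- identify the cardinalities of the `G i` with `eCount`
  have hPcard : ∀ i, (P i).card = i.1.card := by
    intro i
    apply Finset.card_bij (fun V _ => V.1)
    · intro V hV
      simp only [hP, mem_filter, mem_univ, true_and] at hV
      exact hV
    · intro V _ W _ h
      exact Subtype.ext h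
    · intro W hW
      refine ⟨⟨W, components_subset i.2 hW⟩, ?_, rfl⟩
      simp only [hP, mem_filter, mem_univ, true_and]
      exact hW
  have hGcard : ∀ i, (G i).card = eCount i.1 := by
    intro i
    let eIdx : {x // x ∈ P i} ≃ {V : Finset ℕ // V ∈ i.1} :=
      { toFun := fun x => ⟨x.1.1, by
          have := x.2; simp only [hP, mem_filter, mem_univ, true_and] at this; exact this⟩
        invFun := fun V => ⟨⟨V.1, components_subset i.2 V.2⟩, by
          simp only [hP, mem_filter, mem_univ, true_and]; exact V.2⟩
        left_inv := fun x => Subtype.ext (Subtype.ext rfl)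
        right_inv := fun V => Subtype.ext rfl }
    have hEIdx : ∀ x : {x // x ∈ P i}, (eIdx x).1 = x.1.1 := fun _ => rfl
    have hEIdxs : ∀ V : {V : Finset ℕ // V ∈ i.1}, (eIdx.symm V).1.1 = V.1 :=
      fun V => by rw [← hEIdx (eIdx.symm V), eIdx.apply_symm_apply]
    let E : ({x // x ∈ P i} ≃ Fin (P i).card) ≃
        ({V : Finset ℕ // V ∈ i.1} ≃ Fin i.1.card) :=
      Equiv.equivCongr eIdx (finCongr (hPcard i))
    rw [eCount, LExtF]
    apply Finset.card_bij (fun s _ => E s)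
    · intro s hs
      simp only [mem_filter, mem_univ, true_and, hG] at hs ⊢
      intro V W hn
      have h1 : E s V = finCongr (hPcard i) (s (eIdx.symm V)) := rfl
      have h2 : E s W = finCongr (hPcard i) (s (eIdx.symm W)) := rfl
      rw [h1, h2]
      have hlt : s (eIdx.symm V) < s (eIdx.symm W) := by
        apply hs
        rw [hEIdxs V, hEIdxs W]
        exact hn
      exact hlt
    · intro s1 _ s2 _ h
      exact E.injective h
    · intro f hf
      refine ⟨E.symm f, ?_, by simp⟩
      simp only [mem_filter, mem_univ, true_and, hG] at hf ⊢
      intro x y hn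
      have h1 : E.symm f x = (finCongr (hPcard i)).symm (f (eIdx x)) := rfl
      have h2 : E.symm f y = (finCongr (hPcard i)).symm (f (eIdx y)) := rfl
      rw [h1, h2]
      have hlt : f (eIdx x) < f (eIdx y) := by
        apply hf
        rw [hEIdx x, hEIdx y]
        exact hn
      exact hlt
  rw [hidcard] at hsplit
  have hp1 : ∏ τ ∈ components π χh, Nat.factorial τ.card =
      ∏ i : {τ : Blocks // τ ∈ components π χh}, Nat.factorial (P i).card := by
    rw [← Finset.prod_coe_sort]
    exact Finset.prod_congr rfl (fun i _ => by rw [hPcard i])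
  have hp2 : ∏ τ ∈ components π χh, eCount τ =
      ∏ i : {τ : Blocks // τ ∈ components π χh}, (G i).card := by
    rw [← Finset.prod_coe_sort]
    exact Finset.prod_congr rfl (fun i _ => (hGcard i).symm)
  rw [hp1, hp2]
  exact hsplit
end P6
section P7
open Classical Finset in
noncomputable def ORF (N : ℕ) (π : Blocks) : Finset ({V : Finset ℕ // V ∈ π} → Fin N) :=
  Finset.univ.filter (fun χ => ∀ V W : {V : Finset ℕ // V ∈ π},
    NestedIn V.1 W.1 → χ W ≤ χ V)

theorem extendColor_apply {N : ℕ} [NeZero N] {π : Blocks}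
    (χ : {V : Finset ℕ // V ∈ π} → Fin N) (V : {V : Finset ℕ // V ∈ π}) :
    extendColor π χ V.1 = χ V := by
  simp [extendColor]

theorem extendColor_eq {N : ℕ} [NeZero N] {π : Blocks}
    (χ : {V : Finset ℕ // V ∈ π} → Fin N) (W : Finset ℕ) (hW : W ∈ π) :
    extendColor π χ W = χ ⟨W, hW⟩ := by
  simp [extendColor, hW]

open Classical Finset in
theorem sum_good {N : ℕ} [NeZero N] (π : Blocks) (hNC : IsNC π) :
    ∑ χ ∈ ORF N π, (GoodF π χ).card = eCount π * N ^ π.card := by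
  rw [← Finset.card_sigma]
  have hRHS : eCount π * N ^ π.card = ((LExtF π) ×ˢ
      (univ : Finset (Fin π.card → Fin N))).card := by
    rw [Finset.card_product, eCount, Finset.card_univ, Fintype.card_fun, Fintype.card_fin, Fintype.card_fin]
  rw [hRHS]
  apply Finset.card_nbij'
    (i := fun p => (p.2.trans (Tuple.sort (p.1 ∘ p.2.symm)).symm, p.1 ∘ p.2.symm))
    (j := fun q => ⟨fun V => q.2 (Tuple.sort q.2 (q.1 V)), q.1.trans (Tuple.sort q.2)⟩)
  · -- i maps into target
    rintro ⟨χ, h⟩ hp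
    simp only [Finset.mem_coe, Finset.mem_sigma] at hp
    obtain ⟨hχ, hh⟩ := hp
    simp only [ORF, mem_filter, mem_univ, true_and] at hχ
    simp only [GoodF, mem_filter, mem_univ, true_and] at hh
    set w : Fin π.card → Fin N := χ ∘ h.symm with hw
    set σ := Tuple.sort w with hσ
    obtain ⟨hmono, hstab⟩ := (Tuple.eq_sort_iff (f := w)).mp hσ
    simp only [Finset.mem_coe, Finset.mem_product, mem_univ, and_true]
    simp only [LExtF, mem_filter, mem_univ, true_and]
    intro V W hn
    have hwh : ∀ U : {V : Finset ℕ // V ∈ π}, w (h U) = χ U := by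
      intro U; rw [hw]; simp
    have hle : χ V ≤ χ W := hχ W V hn
    show σ.symm (h V) < σ.symm (h W)
    rcases lt_or_eq_of_le hle with hlt | heqc
    · by_contra hcon
      push_neg at hcon
      have h2 : (w ∘ σ) (σ.symm (h W)) ≤ (w ∘ σ) (σ.symm (h V)) := hmono hcon
      rw [Function.comp_apply, Function.comp_apply, Equiv.apply_symm_apply,
        Equiv.apply_symm_apply, hwh V, hwh W] at h2
      exact absurd h2 (not_le.mpr hlt)
    · -- equal colors: same component, use GoodF
      have hOR' : ∀ X ∈ π, ∀ Y ∈ π, NestedIn X Y →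
          extendColor π χ Y ≤ extendColor π χ X := by
        intro X hX Y hY hXY
        have := hχ ⟨X, hX⟩ ⟨Y, hY⟩ hXY
        rw [extendColor_eq χ Y hY, extendColor_eq χ X hX]
        exact this
      have hsc : sameComp π (extendColor π χ) W.1 V.1 := by
        apply nested_sameComp (extendColor π χ) hOR' (betwSet π W.1 V.1).card W.1 V.1
          W.2 V.2 hn
        · rw [extendColor_apply, extendColor_apply, heqc]
        · exact le_rfl
      have hlt := hh V W (sameComp_symm hsc) hn
      by_contra hcon
      push_neg at hcon
      rcases lt_or_eq_of_le hcon with hlt2 | heq2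
      · have h3 := hstab _ _ hlt2 (by
          rw [Equiv.apply_symm_apply, Equiv.apply_symm_apply, hwh V, hwh W, heqc])
        rw [Equiv.apply_symm_apply, Equiv.apply_symm_apply] at h3
        exact absurd hlt (not_lt.mpr (le_of_lt h3))
      · have h4 : h W = h V := σ.symm.injective heq2
        exact absurd hlt (by rw [h4]; exact lt_irrefl _)
  · -- j maps into source
    rintro ⟨f, w⟩ hq
    simp only [Finset.mem_coe, Finset.mem_product, mem_univ, and_true] at hq
    simp only [LExtF, mem_filter, mem_univ, true_and] at hq
    set σ := Tuple.sort w with hσ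
    obtain ⟨hmono, hstab⟩ := (Tuple.eq_sort_iff (f := w)).mp hσ
    simp only [Finset.mem_coe, Finset.mem_sigma]
    constructor
    · simp only [ORF, mem_filter, mem_univ, true_and]
      intro V W hn
      have hfl : f W < f V := hq W V hn
      exact hmono (le_of_lt hfl)
    · simp only [GoodF, mem_filter, mem_univ, true_and]
      intro V W hsc hn
      have hcol : w (σ (f V)) = w (σ (f W)) := by
        have := sameComp_color hsc
        rwa [extendColor_apply, extendColor_apply] at this
      have hfl : f V < f W := hq V W hn
      show σ (f V) < σ (f W)
      exact hstab _ _ hfl hcol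
  · -- left inverse
    rintro ⟨χ, h⟩ hp
    dsimp only
    congr 1
    · funext V
      simp
    · ext V
      simp
  · -- right inverse
    rintro ⟨f, w⟩ hq
    have hwe : ((fun V => w (Tuple.sort w (f V))) ∘ ⇑(f.trans (Tuple.sort w)).symm) = w := by
      funext x
      simp
    simp only [Prod.mk.injEq]
    constructor
    · rw [hwe]
      ext V
      simp
    · exact hwe
end P7
section P8

noncomputable def vol (ρ : Blocks) : ℝ :=
  (eCount ρ : ℝ) / (Nat.factorial ρ.card : ℝ)

open Classical Finset in
theorem wc_filter_eq {N : ℕ} [NeZero N] (π : Blocks) (hNC : IsNC π) :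
    (Finset.univ.filter (fun χ : {V : Finset ℕ // V ∈ π} → Fin N =>
      WeaklyCompatible {s : List (Fin N) | s.Chain' (· > ·)} π (extendColor π χ)))
      = ORF N π := by
  ext χ
  simp only [ORF, Finset.mem_filter, Finset.mem_univ, true_and]
  rw [wc_iff hNC]
  constructor
  · intro h V W hn
    have := h V.1 V.2 W.1 W.2 hn
    rwa [extendColor_eq χ W.1 W.2, extendColor_eq χ V.1 V.2] at this
  · intro h V hV W hW hn
    rw [extendColor_eq χ W hW, extendColor_eq χ V hV]
    exact h ⟨V, hV⟩ ⟨W, hW⟩ hn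

open Classical Finset in
theorem prod_vol_eq {N : ℕ} [NeZero N] (π : Blocks)
    (χ : {V : Finset ℕ // V ∈ π} → Fin N) :
    ∏ τ ∈ components π (extendColor π χ), vol τ =
      ((GoodF π χ).card : ℝ) / (Nat.factorial π.card : ℝ) := by
  have hgs := good_split π χ
  have hfact0 : (∏ τ ∈ components π (extendColor π χ), (Nat.factorial τ.card : ℝ)) ≠ 0 :=
    Finset.prod_ne_zero_iff.mpr (fun τ _ => by exact_mod_cast (Nat.factorial_pos _).ne')
  have hk0 : ((Nat.factorial π.card : ℕ) : ℝ) ≠ 0 := by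
    exact_mod_cast (Nat.factorial_pos _).ne'
  simp only [vol]
  rw [Finset.prod_div_distrib]
  rw [div_eq_div_iff hfact0 hk0]
  have := congrArg (fun n : ℕ => (n : ℝ)) hgs
  push_cast at this ⊢
  linarith [this]

open Classical Finset in
theorem vol_fixed {N : ℕ} [NeZero N] (π : Blocks) (hNC : IsNC π) :
    cumulantRHS N {s : List (Fin N) | s.Chain' (· > ·)} vol π = vol π := by
  rw [cumulantRHS]
  have h1 : (∑ χ : ({V : Finset ℕ // V ∈ π} → Fin N),
      if WeaklyCompatible {s : List (Fin N) | s.Chain' (· > ·)} π (extendColor π χ) then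
        ∏ τ ∈ components π (extendColor π χ), vol τ
      else 0) = ∑ χ ∈ ORF N π, ∏ τ ∈ components π (extendColor π χ), vol τ := by
    rw [← wc_filter_eq π hNC, Finset.sum_filter]
  rw [h1, Finset.sum_congr rfl (fun χ _ => prod_vol_eq π χ), ← Finset.sum_div]
  have h2 : (∑ χ ∈ ORF N π, ((GoodF π χ).card : ℝ)) = ((eCount π * N ^ π.card : ℕ) : ℝ) := by
    rw [← sum_good π hNC]
    push_cast
    rfl
  rw [h2, vol]
  have hk0 : ((Nat.factorial π.card : ℕ) : ℝ) ≠ 0 := by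
    exact_mod_cast (Nat.factorial_pos _).ne'
  have hN0 : ((N : ℝ) ^ π.card) ≠ 0 := pow_ne_zero _ (by exact_mod_cast (NeZero.ne N))
  push_cast
  field_simp
end P8
section P9
open Classical Finset

theorem vol_one (π : Blocks) (h1 : π.card = 1) : vol π = 1 := by
  have hcardA : Fintype.card {V : Finset ℕ // V ∈ π} = 1 := by rw [Fintype.card_coe, h1]
  have hsub : ∀ V W : {V : Finset ℕ // V ∈ π}, V = W :=
    fun V W => Fintype.card_le_one_iff.mp (le_of_eq hcardA) V W
  have hfilter : LExtF π = Finset.univ := by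
    rw [LExtF]
    apply Finset.filter_true_of_mem
    intro f _ V W hn
    exfalso
    have hVW := hsub V W
    rw [hVW] at hn
    exact hn.irrefl
  have hE : eCount π = 1 := by
    rw [eCount, hfilter, Finset.card_univ,
      Fintype.card_equiv (Fintype.equivFinOfCardEq (by rw [hcardA]; exact h1.symm))]
    rw [hcardA]
    rfl
  rw [vol, hE, h1]
  norm_num

theorem a_step {N : ℕ} [NeZero N] (hN : 2 ≤ N) (a : Blocks → ℝ)
    (ha : SatisfiesFP N {s : List (Fin N) | s.Chain' (· > ·)} a)
    (π : Blocks) (hNC : IsNC π)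
    (IH : ∀ τ : Blocks, IsNC τ → τ.card < π.card → a τ = vol τ) : a π = vol π := by
  by_cases hk1 : π.card = 1
  · rw [ha.1 π hNC hk1, vol_one π hk1]
  · set T := {s : List (Fin N) | s.Chain' (· > ·)} with hT
    set S := (Finset.univ.filter (fun χ : {V : Finset ℕ // V ∈ π} → Fin N =>
        WeaklyCompatible T π (extendColor π χ))).filter
        (fun χ => components π (extendColor π χ) = {π}) with hS
    set R := ∑ χ ∈ (Finset.univ.filter (fun χ : {V : Finset ℕ // V ∈ π} → Fin N =>
        WeaklyCompatible T π (extendColor π χ))).filter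
        (fun χ => ¬ components π (extendColor π χ) = {π}),
        ∏ τ ∈ components π (extendColor π χ), vol τ with hR
    have hN0 : ((N : ℝ) ^ π.card) ≠ 0 := pow_ne_zero _ (by
      have := NeZero.ne N
      exact_mod_cast this)
    have key : ∀ b : Blocks → ℝ, (∀ τ, IsNC τ → τ.card < π.card → b τ = vol τ) →
        cumulantRHS N T b π * (N : ℝ) ^ π.card = (S.card : ℝ) * b π + R := by
      intro b hb
      rw [cumulantRHS, div_mul_cancel₀ _ hN0]
      have hsf : (∑ χ : ({V : Finset ℕ // V ∈ π} → Fin N),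
          if WeaklyCompatible T π (extendColor π χ) then
            ∏ τ ∈ components π (extendColor π χ), b τ
          else 0) = ∑ χ ∈ Finset.univ.filter (fun χ => WeaklyCompatible T π (extendColor π χ)),
            ∏ τ ∈ components π (extendColor π χ), b τ := by
        rw [Finset.sum_filter]
      rw [hsf, ← Finset.sum_filter_add_sum_filter_not _
        (fun χ => components π (extendColor π χ) = {π})]
      congr 1
      · rw [Finset.sum_congr rfl (fun χ hχ => ?_), Finset.sum_const, nsmul_eq_mul, ← hS]
        rw [Finset.mem_filter] at hχ
        rw [hχ.2, Finset.prod_singleton]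
      · rw [hR]
        apply Finset.sum_congr rfl
        intro χ hχ
        rw [Finset.mem_filter] at hχ
        apply Finset.prod_congr rfl
        intro τ hτ
        have hτπ : τ ≠ π := by
          intro h
          exact hχ.2 (components_eq_singleton (h ▸ hτ))
        have hss : τ ⊂ π := Finset.ssubset_iff_subset_ne.mpr ⟨components_subset hτ, hτπ⟩
        exact hb τ (components_isNC hNC hτ) (Finset.card_lt_card hss)
    have e1 : a π * (N : ℝ) ^ π.card = (S.card : ℝ) * a π + R := by
      have h := key a IH
      rwa [← ha.2 π hNC] at h
    have e2 : vol π * (N : ℝ) ^ π.card = (S.card : ℝ) * vol π + R := by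
      have h := key vol (fun τ _ _ => rfl)
      rwa [vol_fixed π hNC] at h
    have hc : (S.card : ℝ) < (N : ℝ) ^ π.card := by
      have : S.card < N ^ π.card := by
        rcases Nat.eq_zero_or_pos π.card with h0 | hpos
        · have hempty : S = ∅ := by
            rw [hS]
            apply Finset.filter_false_of_mem
            intro χ _
            have hπe : π = ∅ := Finset.card_eq_zero.mp h0
            intro hcomp
            have : π ∈ components π (extendColor π χ) := by rw [hcomp]; exact mem_singleton_self π
            obtain ⟨V, hV, _⟩ := mem_components.mp this
            rw [hπe] at hV
            simp at hV
          rw [hempty]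
          simp only [Finset.card_empty]
          exact Nat.pos_of_ne_zero (fun h => (by positivity : 0 < N ^ π.card).ne' h)
        · have hk2 : 2 ≤ π.card := by omega
          obtain ⟨V₀, hV₀⟩ := Finset.card_pos.mp (by omega : 0 < π.card)
          have hle : S.card ≤ N := by
            have hinj : Set.InjOn (fun χ : {V : Finset ℕ // V ∈ π} → Fin N =>
                χ ⟨V₀, hV₀⟩) S := by
              intro χ1 h1 χ2 h2 heq
              simp only [hS, Finset.coe_filter, Set.mem_setOf_eq, Finset.mem_filter] at h1 h2
              funext V
              have hcst : ∀ χ : {V : Finset ℕ // V ∈ π} → Fin N,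
                  components π (extendColor π χ) = {π} → χ V = χ ⟨V₀, hV₀⟩ := by
                intro χ hcomp
                have hπc : π ∈ components π (extendColor π χ) := by
                  rw [hcomp]; exact mem_singleton_self π
                have hsc := sameComp_of_mem_component hπc V.2 hV₀
                have := sameComp_color hsc
                rwa [extendColor_apply, extendColor_eq χ V₀ hV₀] at this
              rw [hcst χ1 h1.2, hcst χ2 h2.2]
              exact heq
            have := Finset.card_le_card_of_injOn _ (fun χ _ => Finset.mem_univ
              ((fun χ : {V : Finset ℕ // V ∈ π} → Fin N => χ ⟨V₀, hV₀⟩) χ)) hinj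
            simpa using this
          calc S.card ≤ N := hle
            _ < N ^ π.card := by
              calc N = N ^ 1 := (pow_one N).symm
                _ < N ^ π.card := Nat.pow_lt_pow_right (by omega) (by omega)
      calc (S.card : ℝ) < ((N ^ π.card : ℕ) : ℝ) := by exact_mod_cast this
        _ = (N : ℝ) ^ π.card := by push_cast; ring
    have h3 : (a π - vol π) * ((N : ℝ) ^ π.card - (S.card : ℝ)) = 0 := by
      linear_combination e1 - e2
    rcases mul_eq_zero.mp h3 with h | h
    · linarith [sub_eq_zero.mp h]
    · exfalso
      have := sub_eq_zero.mp h
      linarith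
  
theorem a_eq_vol {N : ℕ} [NeZero N] (hN : 2 ≤ N) (a : Blocks → ℝ)
    (ha : SatisfiesFP N {s : List (Fin N) | s.Chain' (· > ·)} a) :
    ∀ n : ℕ, ∀ π : Blocks, IsNC π → π.card ≤ n → a π = vol π := by
  intro n
  induction n with
  | zero =>
      intro π hNC hc
      exact a_step hN a ha π hNC (fun τ _ h => absurd h (by omega))
  | succ n ih =>
      intro π hNC hc
      exact a_step hN a ha π hNC (fun τ hτ h => ih τ hτ (by omega))
end P9

/-- For the monotone tree `T_{N,mono}` of strictly decreasing strings on `[N]`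
(`N ≥ 2`), the cumulant coefficient of `π` is `|Ord(π)| / |π|!`, where `Ord(π)`
is the set of total orders on the blocks of `π` extending the nesting partial
order `≺` (modelled as bijective labelings `f` of the blocks by `Fin |π|` such
that an outer block receives a smaller label than any block nested inside it). -/
theorem stmt12 {N : ℕ} [NeZero N] (hN : 2 ≤ N)
    (a : Blocks → ℝ)
    (ha : SatisfiesFP N {s : List (Fin N) | s.Chain' (· > ·)} a) :
    ∀ π : Blocks, IsNC π →
      a π = ({f : {V : Finset ℕ // V ∈ π} ≃ Fin π.card |
          ∀ V W : {V : Finset ℕ // V ∈ π}, NestedIn W.1 V.1 → f V < f W}.ncard : ℝ)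
        / (Nat.factorial π.card : ℝ) := by
  intro π hNC
  have h1 : a π = vol π := a_eq_vol hN a ha π.card π hNC le_rfl
  rw [h1, vol]
  congr 1
  have h2 : ({f : {V : Finset ℕ // V ∈ π} ≃ Fin π.card |
      ∀ V W : {V : Finset ℕ // V ∈ π}, NestedIn W.1 V.1 → f V < f W}.ncard) = eCount π := by
    classical
    have h3 : {f : {V : Finset ℕ // V ∈ π} ≃ Fin π.card |
        ∀ V W : {V : Finset ℕ // V ∈ π}, NestedIn W.1 V.1 → f V < f W} =
        (↑(LExtF π) : Set _) := by
      rw [LExtF]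
      ext f
      simp
    rw [h3, Set.ncard_coe_finset, eCount]
  exact_mod_cast h2.symm
end
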